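/- Under the same recursion with a₀ = cosh(κε)/(2ε), b₀ = 1/(2ε), the closed form a_k = (sinh(κε)/(2ε)) · cosh((k+1)κε)/sinh((k+1)κε) holds for all k ≥ 0. -/

import Mathlib

theorem stmt_8 (κ ε : ℝ) (hε : 0 < ε) (hκ : 0 < κ) :
    ∀ k : ℕ,
      Real.sqrt (((1 / (2 * ε)) * Real.sinh (κ * ε) / Real.sinh ((k + 1) * κ * ε)) ^ 2
          + (Real.cosh (κ * ε) / (2 * ε)) ^ 2 - (1 / (2 * ε)) ^ 2)
        = (Real.sinh (κ * ε) / (2 * ε)) *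
            (Real.cosh ((k + 1) * κ * ε) / Real.sinh ((k + 1) * κ * ε)) := by
  intro k
  have hke : 0 < κ * ε := mul_pos hκ hε
  have hs : 0 < Real.sinh (κ * ε) := Real.sinh_pos_iff.mpr hke
  have hS : 0 < Real.sinh ((k + 1) * κ * ε) := by
    apply Real.sinh_pos_iff.mpr; positivity
  have hC : 0 < Real.cosh ((k + 1) * κ * ε) := Real.cosh_pos _
  have key : ((1 / (2 * ε)) * Real.sinh (κ * ε) / Real.sinh ((k + 1) * κ * ε)) ^ 2
          + (Real.cosh (κ * ε) / (2 * ε)) ^ 2 - (1 / (2 * ε)) ^ 2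
      = ((Real.sinh (κ * ε) / (2 * ε)) *
            (Real.cosh ((k + 1) * κ * ε) / Real.sinh ((k + 1) * κ * ε))) ^ 2 := by
    have h1 : Real.cosh (κ * ε) ^ 2 = Real.sinh (κ * ε) ^ 2 + 1 := Real.cosh_sq _
    have h2 : Real.cosh ((k + 1) * κ * ε) ^ 2
        = Real.sinh ((k + 1) * κ * ε) ^ 2 + 1 := Real.cosh_sq _
    field_simp
    linear_combination Real.sinh (ε * κ * ((k:ℝ) + 1)) ^ 2 * Real.cosh_sq (ε * κ)
      - Real.sinh (ε * κ) ^ 2 * Real.cosh_sq (ε * κ * ((k:ℝ) + 1))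
  rw [key, Real.sqrt_sq (by positivity)]
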